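/- In Ω¹_R/dR for R = ℂ[t,t⁻¹,u] with uᵐ = k(t) = Σₖ₌₀ᵈ aₖtᵏ monic of degree d, for every j ∈ ℤ one has ((m+1)d + mj)·tᵈ⁺ʲ⁻¹u·dt ≡ -Σₖ₌₀^{d-1} ((m+1)k + mj)·aₖ·tᵏ⁺ʲ⁻¹u·dt modulo dR. -/

import Mathlib

noncomputable section

abbrev LA : Type := LaurentPolynomial ℂ

/-- The superelliptic ring `R = ℂ[t,t⁻¹,u]` with `u^m = k(t)`. -/
abbrev SER (m : ℕ) (k : Polynomial ℂ) : Type :=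
  AdjoinRoot ((Polynomial.X : Polynomial LA) ^ m - Polynomial.C k.toLaurent)

/-- `t^i ∈ R` for `i : ℤ`. -/
def tpow (m : ℕ) (k : Polynomial ℂ) (i : ℤ) : SER m k :=
  AdjoinRoot.of _ (LaurentPolynomial.T i)

/-- `u ∈ R`. -/
def uu (m : ℕ) (k : Polynomial ℂ) : SER m k := AdjoinRoot.root _

/-- The universal derivation `d : R → Ω¹_{R/ℂ}`. -/
def Dd (m : ℕ) (k : Polynomial ℂ) :
    Derivation ℂ (SER m k) (KaehlerDifferential ℂ (SER m k)) :=
  KaehlerDifferential.D ℂ (SER m k)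

/-- The subspace `dR ⊆ Ω¹_R` of exact differentials. -/
def dR (m : ℕ) (k : Polynomial ℂ) : Submodule ℂ (KaehlerDifferential ℂ (SER m k)) :=
  LinearMap.range (Dd m k).toLinearMap

/-- The quotient `Ω¹_R / dR`. -/
abbrev OmQ (m : ℕ) (k : Polynomial ℂ) := KaehlerDifferential ℂ (SER m k) ⧸ dR m k

/-- The class of a differential in `Ω¹_R / dR`. -/
def cl (m : ℕ) (k : Polynomial ℂ) (w : KaehlerDifferential ℂ (SER m k)) : OmQ m k :=
  Submodule.Quotient.mk w

/-- The polynomial `k(t) = Σ_{i=0}^d a_i t^i`. -/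
def kpoly (d : ℕ) (a : ℕ → ℂ) : Polynomial ℂ :=
  ∑ i ∈ Finset.range (d + 1), Polynomial.C (a i) * Polynomial.X ^ i

section helpers
variable (m : ℕ) (k : Polynomial ℂ)

lemma tpow_add (i j : ℤ) : tpow m k i * tpow m k j = tpow m k (i + j) := by
  unfold tpow
  rw [← map_mul, ← LaurentPolynomial.T_add]

lemma tpow_zero' : tpow m k 0 = 1 := by
  unfold tpow
  rw [LaurentPolynomial.T_zero, map_one]

lemma D_tpow (i : ℤ) :
    Dd m k (tpow m k i) = (i : ℂ) • (tpow m k (i - 1) • Dd m k (tpow m k 1)) := by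
  induction i using Int.induction_on with
  | zero => simp [tpow_zero']
  | succ n ih =>
      rw [← tpow_add m k n 1, Derivation.leibniz, ih,
        show ((n : ℤ) + 1 - 1 : ℤ) = (n : ℤ) by ring]
      push_cast
      rw [smul_comm (tpow m k 1) ((n : ℂ)), smul_smul (tpow m k 1), tpow_add,
        show (1 + ((n : ℤ) - 1)) = (n : ℤ) by ring, add_smul, one_smul]
      abel
  | pred n ih =>
      have h : tpow m k (-(n:ℤ)) = tpow m k (-(n:ℤ) - 1) * tpow m k 1 := by
        rw [tpow_add]; ring_nf
      have hD := ih
      rw [h, Derivation.leibniz] at hD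
      have key : tpow m k 1 • Dd m k (tpow m k (-(n:ℤ) - 1))
          = ((-(n:ℂ) - 1)) • (tpow m k (-(n:ℤ) - 1) • Dd m k (tpow m k 1)) := by
        have h2 := eq_sub_of_add_eq' hD
        rw [h2, sub_smul, one_smul]
        norm_cast
      rw [show ((-(n:ℤ) - 1 : ℤ) : ℂ) = -(n:ℂ) - 1 by push_cast; ring,
        show (-(n:ℤ) - 1 - 1 : ℤ) = -(n:ℤ) - 2 by ring]
      calc Dd m k (tpow m k (-(n:ℤ) - 1))
          = tpow m k (-1) • tpow m k 1 • Dd m k (tpow m k (-(n:ℤ) - 1)) := by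
            rw [smul_smul, tpow_add, show (-1 + 1 : ℤ) = 0 by ring, tpow_zero', one_smul]
        _ = tpow m k (-1) • ((-(n:ℂ) - 1) • (tpow m k (-(n:ℤ) - 1) • Dd m k (tpow m k 1))) := by
            rw [key]
        _ = (-(n:ℂ) - 1) • (tpow m k (-(n:ℤ) - 2) • Dd m k (tpow m k 1)) := by
            rw [smul_comm, smul_smul, tpow_add,
              show (-1 + (-(n:ℤ) - 1) : ℤ) = -(n:ℤ) - 2 by ring]

lemma upow : uu m k ^ m = AdjoinRoot.of _ k.toLaurent := by
  have h : AdjoinRoot.mk ((Polynomial.X : Polynomial LA) ^ m - Polynomial.C k.toLaurent)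
      ((Polynomial.X : Polynomial LA) ^ m - Polynomial.C k.toLaurent) = 0 :=
    AdjoinRoot.mk_self
  rw [map_sub, map_pow, sub_eq_zero] at h
  exact h

lemma of_C_smul (c : ℂ) (x : SER m k) :
    AdjoinRoot.of _ (LaurentPolynomial.C c) * x = c • x := by
  rw [LaurentPolynomial.C_eq_algebraMap, Algebra.smul_def, AdjoinRoot.algebraMap_eq',
    RingHom.comp_apply]

lemma of_kpoly (d : ℕ) (a : ℕ → ℂ) :
    AdjoinRoot.of ((Polynomial.X : Polynomial LA) ^ m - Polynomial.C k.toLaurent)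
        ((kpoly d a).toLaurent)
      = ∑ i ∈ Finset.range (d + 1), a i • tpow m k (i : ℤ) := by
  unfold kpoly
  rw [map_sum, map_sum]
  refine Finset.sum_congr rfl fun i _ => ?_
  rw [map_mul, map_mul, Polynomial.toLaurent_C, Polynomial.toLaurent_X_pow, of_C_smul]
  rfl

lemma Dtu (i : ℤ) :
    Dd m k (tpow m k i * uu m k)
      = tpow m k i • Dd m k (uu m k)
        + (i : ℂ) • ((tpow m k (i - 1) * uu m k) • Dd m k (tpow m k 1)) := by
  rw [Derivation.leibniz, D_tpow]
  congr 1
  rw [smul_comm (uu m k), smul_smul, mul_comm (uu m k)]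

lemma D_upow_succ :
    Dd m k (uu m k ^ (m + 1))
      = ((m : ℂ) + 1) •
          ((AdjoinRoot.of _ k.toLaurent : SER m k) • Dd m k (uu m k)) := by
  rw [Derivation.leibniz_pow]
  simp only [Nat.add_sub_cancel]
  rw [upow, ← Nat.cast_smul_eq_nsmul ℂ]
  push_cast
  ring_nf

lemma of_kpoly_mul (d : ℕ) (a : ℕ → ℂ) (s : ℤ) :
    AdjoinRoot.of ((Polynomial.X : Polynomial LA) ^ m - Polynomial.C k.toLaurent)
        ((kpoly d a).toLaurent) * tpow m k s
      = ∑ i ∈ Finset.range (d + 1), a i • tpow m k ((i : ℤ) + s) := by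
  rw [of_kpoly, Finset.sum_mul]
  refine Finset.sum_congr rfl fun i _ => ?_
  rw [smul_mul_assoc, tpow_add]

end helpers

set_option maxHeartbeats 2000000 in
theorem stmt12 (m : ℕ) (hm : 2 ≤ m) (d : ℕ) (a : ℕ → ℂ) (had : a d = 1) (j : ℤ) :
    (((m : ℂ) + 1) * (d : ℂ) + (m : ℂ) * (j : ℂ)) •
        cl m (kpoly d a)
          ((tpow m (kpoly d a) ((d : ℤ) + j - 1) * uu m (kpoly d a)) •
            Dd m (kpoly d a) (tpow m (kpoly d a) 1))
      = -∑ k ∈ Finset.range d,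
          ((((m : ℂ) + 1) * (k : ℂ) + (m : ℂ) * (j : ℂ)) * a k) •
            cl m (kpoly d a)
              ((tpow m (kpoly d a) ((k : ℤ) + j - 1) * uu m (kpoly d a)) •
                Dd m (kpoly d a) (tpow m (kpoly d a) 1)) := by
  set k := kpoly d a with hk
  set ω : ℕ → KaehlerDifferential ℂ (SER m k) :=
    fun i => (tpow m k ((i : ℤ) + j - 1) * uu m k) • Dd m k (tpow m k 1) with hω
  set c : ℕ → ℂ := fun i => (((m : ℂ) + 1) * (i : ℂ) + (m : ℂ) * (j : ℂ)) * a i with hc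
  -- the key sum identity in Ω¹
  set Du := Dd m k (uu m k) with hDu
  set X : SER m k := ∑ i ∈ Finset.range (d + 1), a i • (tpow m k ((i : ℤ) + j) * uu m k)
    with hX
  set Y : SER m k := tpow m k j * uu m k ^ (m + 1) with hY
  have hDX : Dd m k X
      = (∑ i ∈ Finset.range (d + 1), a i • (tpow m k ((i : ℤ) + j) • Du))
        + ∑ i ∈ Finset.range (d + 1), (((i : ℂ) + (j : ℂ)) * a i) • ω i := by
    rw [hX, map_sum, ← Finset.sum_add_distrib]
    refine Finset.sum_congr rfl fun i _ => ?_
    rw [Derivation.map_smul, Dtu, smul_add, smul_smul]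
    congr 1
    congr 1
    push_cast
    ring
  have hKt : ∀ s : ℤ, tpow m k s * (AdjoinRoot.of _ k.toLaurent : SER m k)
      = ∑ i ∈ Finset.range (d + 1), a i • tpow m k ((i : ℤ) + s) := by
    intro s
    rw [mul_comm, hk, of_kpoly_mul]
  have hDY : Dd m k Y
      = ((m : ℂ) + 1) • (∑ i ∈ Finset.range (d + 1), a i • (tpow m k ((i : ℤ) + j) • Du))
        + (j : ℂ) • ∑ i ∈ Finset.range (d + 1), a i • ω i := by
    rw [hY, Derivation.leibniz, D_upow_succ, D_tpow]
    congr 1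
    · rw [smul_comm (tpow m k j), smul_smul, hKt j, Finset.sum_smul]
      congr 1
      refine Finset.sum_congr rfl fun i _ => ?_
      rw [smul_assoc]
    · rw [smul_comm (uu m k ^ (m + 1)), smul_smul]
      congr 1
      have hu : uu m k ^ (m + 1) * tpow m k (j - 1)
          = ∑ i ∈ Finset.range (d + 1), a i • (tpow m k ((i : ℤ) + j - 1) * uu m k) := by
        calc uu m k ^ (m + 1) * tpow m k (j - 1)
            = tpow m k (j - 1) * (AdjoinRoot.of _ k.toLaurent : SER m k) * uu m k := by
              rw [pow_succ, upow]; ring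
          _ = (∑ i ∈ Finset.range (d + 1), a i • tpow m k ((i : ℤ) + (j - 1))) * uu m k := by
              rw [hKt (j - 1)]
          _ = ∑ i ∈ Finset.range (d + 1), a i • (tpow m k ((i : ℤ) + j - 1) * uu m k) := by
              rw [Finset.sum_mul]
              refine Finset.sum_congr rfl fun i _ => ?_
              rw [smul_mul_assoc, show (i : ℤ) + (j - 1) = (i : ℤ) + j - 1 by ring]
      rw [hu, Finset.sum_smul]
      refine Finset.sum_congr rfl fun i _ => ?_
      rw [smul_assoc]
  have hE : ∑ i ∈ Finset.range (d + 1), c i • ω i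
      = ((m : ℂ) + 1) • Dd m k X - Dd m k Y := by
    rw [hDX, hDY, smul_add]
    rw [show ∀ A B A' C' : KaehlerDifferential ℂ (SER m k),
      (A + B) - (A' + C') = (B - C') + (A - A') from fun A B A' C' => by abel]
    rw [sub_self, add_zero, Finset.smul_sum, Finset.smul_sum, ← Finset.sum_sub_distrib]
    refine Finset.sum_congr rfl fun i _ => ?_
    rw [smul_smul, smul_smul, ← sub_smul, hc]
    congr 1
    ring
  have hmem : (∑ i ∈ Finset.range (d + 1), c i • ω i) ∈ dR m k := by
    rw [hE]
    exact Submodule.sub_mem _ (Submodule.smul_mem _ _ ⟨X, rfl⟩) ⟨Y, rfl⟩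
  have hsum : ∑ i ∈ Finset.range (d + 1), c i • cl m k (ω i) = 0 := by
    have : ∑ i ∈ Finset.range (d + 1), c i • cl m k (ω i)
        = cl m k (∑ i ∈ Finset.range (d + 1), c i • ω i) := by
      unfold cl
      rw [← Submodule.mkQ_apply, map_sum]
      refine Finset.sum_congr rfl fun i _ => ?_
      rw [map_smul, Submodule.mkQ_apply]
    rw [this]
    exact (Submodule.Quotient.mk_eq_zero _).2 hmem
  rw [Finset.sum_range_succ] at hsum
  have hd : c d • cl m k (ω d) = (((m : ℂ) + 1) * (d : ℂ) + (m : ℂ) * (j : ℂ)) •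
      cl m k (ω d) := by
    rw [hc]
    simp [had]
  rw [hd] at hsum
  have := eq_neg_of_add_eq_zero_right hsum
  exact this
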